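/- Let A be an m×m real symmetric positive semidefinite matrix and B an m×m real skew-symmetric matrix with A - iB positive semidefinite. Then rank(A) ≥ rank(B). -/

import Mathlib

open Matrix Complex ComplexOrder

/-- For `A` real symmetric PSD and `B` real skew-symmetric with `A - iB`
positive semidefinite, `rank A ≥ rank B` (ranks over `ℂ`). -/
theorem rank_A_ge_rank_B (m : ℕ) (A B : Matrix (Fin m) (Fin m) ℝ)
    (hA : (A.map Complex.ofReal).PosSemidef)
    (hB : Bᵀ = -B)
    (h : ((A.map Complex.ofReal) - Complex.I • (B.map Complex.ofReal)).PosSemidef) :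
    (B.map Complex.ofReal).rank ≤ (A.map Complex.ofReal).rank := by
  set A' := A.map Complex.ofReal with hA'
  set B' := B.map Complex.ofReal with hB'
  set M := A' - Complex.I • B' with hM
  have hAt : A'ᵀ = A' := by
    ext i j
    have := congrFun (congrFun hA.1.symm j) i
    simpa [Matrix.conjTranspose_apply, hA', Matrix.map_apply] using this
  have hBt : B'ᵀ = -B' := by
    ext i j
    have : B j i = -B i j := by rw [← Matrix.transpose_apply B, hB]; rfl
    simp [hB', Matrix.map_apply, this]
  have hMt : Mᵀ = A' + Complex.I • B' := by
    rw [hM, transpose_sub, transpose_smul, hBt, hAt, smul_neg, sub_neg_eq_add]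
  have hker : LinearMap.ker A'.mulVecLin ≤ LinearMap.ker B'.mulVecLin := by
    intro x hx
    have hx : A' *ᵥ x = 0 := hx
    have hMT : Mᵀ.PosSemidef := h.transpose
    have h1 : (0:ℂ) ≤ star x ⬝ᵥ M *ᵥ x := h.dotProduct_mulVec_nonneg x
    have h2 : (0:ℂ) ≤ star x ⬝ᵥ Mᵀ *ᵥ x := hMT.dotProduct_mulVec_nonneg x
    have hsum : star x ⬝ᵥ M *ᵥ x + star x ⬝ᵥ Mᵀ *ᵥ x = 0 := by
      rw [← dotProduct_add, ← add_mulVec, hMt, hM]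
      have : A' - Complex.I • B' + (A' + Complex.I • B') = A' + A' := by module
      rw [this, add_mulVec, hx]
      simp
    have hz : star x ⬝ᵥ M *ᵥ x = 0 := ((add_eq_zero_iff_of_nonneg h1 h2).mp hsum).1
    have hMx : M *ᵥ x = 0 := (h.dotProduct_mulVec_zero_iff x).mp hz
    have : Complex.I • (B' *ᵥ x) = 0 := by
      have := hMx
      rw [hM, sub_mulVec, hx, smul_mulVec] at this
      simpa using this
    have hBx : B' *ᵥ x = 0 := by
      have := smul_eq_zero.mp this
      rcases this with h' | h'
      · exact absurd h' Complex.I_ne_zero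
      · exact h'
    exact hBx
  have hkd : Module.finrank ℂ (LinearMap.ker A'.mulVecLin) ≤
      Module.finrank ℂ (LinearMap.ker B'.mulVecLin) := Submodule.finrank_mono hker
  have e1 := LinearMap.finrank_range_add_finrank_ker A'.mulVecLin
  have e2 := LinearMap.finrank_range_add_finrank_ker B'.mulVecLin
  rw [Module.finrank_fintype_fun_eq_card] at e1 e2
  unfold Matrix.rank
  omega
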